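/- If for a segment S of a DAG task the condition C_v ≤ (∑_{u∈S} C_u)/m holds for all v ∈ S, then McNaughton's wraparound algorithm on m processors produces a valid schedule of S of length exactly W/m, where W = ∑_{u∈S} C_u: each node is assigned total time C_v, no processor is double-booked, and no node runs on two processors simultaneously. -/

import Mathlib

open MeasureTheory

lemma key_clamp (s e x y : ℝ) (hse : s ≤ e) (hxy : x ≤ y) :
    (e ⊓ y - s ⊔ x) ⊔ 0 = s ⊔ (e ⊓ y) - s ⊔ (e ⊓ x) := by
  simp only [max_def, min_def]
  split_ifs <;> linarith

theorem stmt14 (n m : ℕ) (hm : 0 < m) (C : Fin n → ℝ) (hC : ∀ j, 0 ≤ C j)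
    (hsmall : ∀ j, C j ≤ (∑ i, C i) / m) :
    ∃ σ : Fin n → Fin m → Set ℝ,
      (∀ j p, ∃ a b : ℝ, σ j p = Set.Ico a b) ∧
      (∀ j p, σ j p ⊆ Set.Ico 0 ((∑ i, C i) / m)) ∧
      (∀ j, ∑ p, (volume (σ j p)).toReal = C j) ∧
      (∀ p, ∀ j j' : Fin n, j ≠ j' → Disjoint (σ j p) (σ j' p)) ∧
      (∀ j, ∀ p p' : Fin m, p ≠ p' → Disjoint (σ j p) (σ j p')) := by
  set W := ∑ i, C i with hW
  set L := W / m with hLdef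
  have hm' : (0:ℝ) < m := by exact_mod_cast hm
  have hW0 : 0 ≤ W := Finset.sum_nonneg fun i _ => hC i
  have hL0 : 0 ≤ L := div_nonneg hW0 hm'.le
  have hmL : (m:ℝ) * L = W := by rw [hLdef]; field_simp [hm'.ne']
  set D : ℕ → ℝ := fun i => if h : i < n then C ⟨i, h⟩ else 0 with hD
  have hD0 : ∀ i, 0 ≤ D i := by
    intro i; simp only [hD]; split
    · exact hC _
    · exact le_refl 0
  set S : ℕ → ℝ := fun k => ∑ i ∈ Finset.range k, D i with hS
  have hSmono : Monotone S := fun a b hab =>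
    Finset.sum_le_sum_of_subset_of_nonneg (Finset.range_subset_range.2 hab)
      (fun i _ _ => hD0 i)
  have hSn : S n = W := by
    simp only [hS, hW]
    rw [← Fin.sum_univ_eq_sum_range]
    apply Finset.sum_congr rfl
    intro i _
    simp [hD, i.isLt]
  have hSsucc : ∀ j : Fin n, S (j + 1) = S j + C j := by
    intro j
    simp only [hS, Finset.sum_range_succ]
    congr 1
    simp [hD, j.isLt]
  have hS0 : ∀ k, 0 ≤ S k := fun k => Finset.sum_nonneg fun i _ => hD0 i
  refine ⟨fun j p => Set.Ico (S j ⊔ ((p:ℝ) * L) - p * L)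
      (S (j + 1) ⊓ (((p:ℝ) + 1) * L) - p * L), ?_, ?_, ?_, ?_, ?_⟩
  · intro j p; exact ⟨_, _, rfl⟩
  · intro j p t ht
    obtain ⟨h1, h2⟩ := ht
    constructor
    · have := le_max_right (S j) ((p:ℝ) * L); linarith
    · have := min_le_right (S (j + 1)) (((p:ℝ) + 1) * L); linarith
  · intro j
    have hterm : ∀ p : Fin m,
        (volume (Set.Ico (S j ⊔ ((p:ℝ) * L) - p * L)
          (S (j + 1) ⊓ (((p:ℝ) + 1) * L) - p * L))).toReal
        = S j ⊔ (S (j + 1) ⊓ (((p:ℝ) + 1) * L)) - S j ⊔ (S (j + 1) ⊓ ((p:ℝ) * L)) := by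
      intro p
      rw [Real.volume_Ico, ENNReal.toReal_ofReal']
      have : S (j + 1) ⊓ (((p:ℝ) + 1) * L) - p * L - (S j ⊔ ((p:ℝ) * L) - p * L)
          = S (j + 1) ⊓ (((p:ℝ) + 1) * L) - S j ⊔ ((p:ℝ) * L) := by ring
      rw [this, key_clamp]
      · linarith [hSsucc j, hC j]
      · nlinarith
    simp only [hterm]
    have := Finset.sum_range_sub (fun p : ℕ => S j ⊔ (S (j + 1) ⊓ ((p:ℝ) * L))) m
    rw [Fin.sum_univ_eq_sum_range (fun p : ℕ => S j ⊔ (S (j + 1) ⊓ (((p:ℝ) + 1) * L))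
        - S j ⊔ (S (j + 1) ⊓ ((p:ℝ) * L))) m]
    have heq : ∀ p ∈ Finset.range m,
        S j ⊔ (S (j + 1) ⊓ (((p:ℝ) + 1) * L)) - S j ⊔ (S (j + 1) ⊓ ((p:ℝ) * L))
        = (fun p : ℕ => S j ⊔ (S (j + 1) ⊓ ((p:ℝ) * L))) (p + 1)
          - (fun p : ℕ => S j ⊔ (S (j + 1) ⊓ ((p:ℝ) * L))) p := by
      intro p _; push_cast; ring_nf
    rw [Finset.sum_congr rfl heq, this]
    have hle : S (j + 1) ≤ (m:ℝ) * L := by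
      rw [hmL, ← hSn]; exact hSmono j.isLt
    have h1 : S (j + 1) ⊓ ((m:ℝ) * L) = S (j + 1) := min_eq_left hle
    have h2 : S j ⊔ S (j + 1) = S (j + 1) := max_eq_right (hSmono (Nat.le_succ _))
    push_cast
    rw [zero_mul, h1, h2, min_eq_right (hS0 (j + 1)), max_eq_left (hS0 j)]
    linarith [hSsucc j]
  · intro p j j' hjj'
    have key : ∀ a b : Fin n, a < b → Disjoint
        (Set.Ico (S a ⊔ ((p:ℝ) * L) - p * L) (S (a + 1) ⊓ (((p:ℝ) + 1) * L) - p * L))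
        (Set.Ico (S b ⊔ ((p:ℝ) * L) - p * L) (S (b + 1) ⊓ (((p:ℝ) + 1) * L) - p * L)) := by
      intro a b hab
      rw [Set.Ico_disjoint_Ico]
      have h1 : S (a + 1) ≤ S b := hSmono hab
      have h2 := min_le_left (S (a + 1)) (((p:ℝ) + 1) * L)
      have h3 := le_max_left (S b) ((p:ℝ) * L)
      calc min (S (a + 1) ⊓ (((p:ℝ) + 1) * L) - p * L) (S (b + 1) ⊓ (((p:ℝ) + 1) * L) - p * L)
          ≤ S (a + 1) ⊓ (((p:ℝ) + 1) * L) - p * L := min_le_left _ _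
        _ ≤ S b ⊔ ((p:ℝ) * L) - p * L := by linarith
        _ ≤ max (S a ⊔ ((p:ℝ) * L) - p * L) (S b ⊔ ((p:ℝ) * L) - p * L) := le_max_right _ _
    rcases hjj'.lt_or_gt with h | h
    · exact key _ _ h
    · exact (key _ _ h).symm
  · intro j p p' hpp'
    have key : ∀ q q' : Fin m, q < q' → Disjoint
        (Set.Ico (S j ⊔ ((q:ℝ) * L) - q * L) (S (j + 1) ⊓ (((q:ℝ) + 1) * L) - q * L))
        (Set.Ico (S j ⊔ ((q':ℝ) * L) - q' * L) (S (j + 1) ⊓ (((q':ℝ) + 1) * L) - q' * L)) := by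
      intro q q' hqq'
      rw [Set.Ico_disjoint_Ico]
      have hq1 : (q:ℝ) + 1 ≤ (q':ℝ) := by exact_mod_cast hqq'
      have hCL : C j ≤ L := hsmall j
      have hse := hSsucc j
      calc min (S (j + 1) ⊓ (((q:ℝ) + 1) * L) - q * L) (S (j + 1) ⊓ (((q':ℝ) + 1) * L) - q' * L)
          ≤ S (j + 1) ⊓ (((q':ℝ) + 1) * L) - q' * L := min_le_right _ _
        _ ≤ S (j + 1) - q' * L := by linarith [min_le_left (S (j + 1)) (((q':ℝ) + 1) * L)]
        _ ≤ S j ⊔ ((q:ℝ) * L) - q * L := by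
            have := le_max_left (S j) ((q:ℝ) * L)
            nlinarith
        _ ≤ max (S j ⊔ ((q:ℝ) * L) - q * L) (S j ⊔ ((q':ℝ) * L) - q' * L) := le_max_left _ _
    rcases hpp'.lt_or_gt with h | h
    · exact key _ _ h
    · exact (key _ _ h).symm
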